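/- Let (W,S), π : G → W, T, and a c-datum c be as in the context, and let c(w̄;ī) be the associated product. Let w̄ = (g₁,…,g_n) be a list of elements of G with each π(g_i) ∈ S, let ī = (i₁ < ⋯ < i_r) be an index list with 1 ≤ i₁ < ⋯ < i_r ≤ n, and set x := π(g_{i₁}⋯g_{i_r}) and w := π(g₁⋯g_n). Then for every a ∈ ℤ[T] one has c(w̄;ī)·(x·a) = c(w̄;ī)·(w·a). (This is the paper's lemma 'c_{w̄}^{x̄}(x·c) = c_{w̄}^{x̄}(w·c)' in Section 4.4.) -/

import Mathlib

open MonoidAlgebra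

/-- The product `c(w̄;ī)` of Section 4.4 of the paper, where a word together with a
selected subword is encoded as a list of pairs `(g, selected?)`: unselected letters `g`
contribute a factor `c g`, and each selected letter `g` twists everything to its right
by the ring automorphism `σ (π g)`. -/
noncomputable def cWord {G W : Type*} [Group G] [Group W] (π : G →* W)
    (σ : W →* RingAut (MonoidAlgebra ℤ π.ker))
    (c : G → MonoidAlgebra ℤ π.ker) : List (G × Bool) → MonoidAlgebra ℤ π.ker
  | [] => 1
  | (g, false) :: l => c g * cWord π σ c l
  | (g, true) :: l => σ (π g) (cWord π σ c l)

/-- The paper's Lemma `c_{w̄}^{x̄} (x·a) = c_{w̄}^{x̄} (w·a)` (Section 4.4): for a word `w̄`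
in letters lifting simple reflections with selected subword of image `x`, and full image
`w`, one has `c(w̄;ī)·(x·a) = c(w̄;ī)·(w·a)` for all `a ∈ ℤ[T]`. -/
theorem cWord_mul_smul_eq {B W G : Type*} [Group W] [Group G] {M : CoxeterMatrix B}
    (cs : CoxeterSystem M W) (π : G →* W) (hπ : Function.Surjective π)
    (hT : ∀ a b : π.ker, a * b = b * a)
    (σ : W →* RingAut (MonoidAlgebra ℤ π.ker))
    (hσ : ∀ (g : G) (t : π.ker),
      σ (π g) (MonoidAlgebra.of ℤ π.ker t) =
        MonoidAlgebra.of ℤ π.ker ⟨g * t * g⁻¹, (MonoidHom.normal_ker π).conj_mem t t.2 g⟩)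
    (c : G → MonoidAlgebra ℤ π.ker)
    (hc_a : ∀ g : G, cs.IsReflection (π g) → ∀ t : π.ker,
      c (↑t * g) = MonoidAlgebra.of ℤ π.ker t * c g)
    (hc_b : ∀ g h : G, cs.IsReflection (π g) → c (h * g * h⁻¹) = σ (π h) (c g))
    (hc_c : ∀ g : G, cs.IsReflection (π g) →
      ∀ x : MonoidAlgebra ℤ π.ker, c g * x = c g * σ (π g) x)
    (l : List (G × Bool)) (hl : ∀ p ∈ l, ∃ i : B, π p.1 = cs.simple i)
    (a : MonoidAlgebra ℤ π.ker) :
    cWord π σ c l * σ (π (((l.filter fun p => p.2).map Prod.fst).prod)) a =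
      cWord π σ c l * σ (π ((l.map Prod.fst).prod)) a := by
  induction l generalizing a with
  | nil => rfl
  | cons p l ih =>
    obtain ⟨g, b⟩ := p
    have hl' : ∀ p ∈ l, ∃ i : B, π p.1 = cs.simple i :=
      fun p hp => hl p (List.mem_cons_of_mem _ hp)
    obtain ⟨i, hi⟩ := hl (g, b) List.mem_cons_self
    have hrefl : cs.IsReflection (π g) := hi ▸ cs.isReflection_simple i
    have h1 : ∀ w w' : W, ∀ x : MonoidAlgebra ℤ π.ker,
        σ (w * w') x = σ w (σ w' x) := by
      intro w w' x; rw [map_mul]; rfl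
    cases b with
    | true =>
      have hfil : List.filter (fun p : G × Bool => p.2) ((g, true) :: l)
          = (g, true) :: List.filter (fun p : G × Bool => p.2) l := by
        simp [List.filter_cons]
      have hcw : cWord π σ c ((g, true) :: l) = σ (π g) (cWord π σ c l) := rfl
      rw [hfil, hcw, List.map_cons, List.map_cons, List.prod_cons, List.prod_cons,
        map_mul π, map_mul π, h1, h1, ← map_mul (σ (π g)), ← map_mul (σ (π g)), ih hl']
    | false =>
      have hfil : List.filter (fun p : G × Bool => p.2) ((g, false) :: l)
          = List.filter (fun p : G × Bool => p.2) l := by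
        simp [List.filter_cons]
      have hcw : cWord π σ c ((g, false) :: l) = c g * cWord π σ c l := rfl
      rw [hfil, hcw, List.map_cons, List.prod_cons, map_mul π, h1,
        mul_assoc, ih hl']
      calc c g * (cWord π σ c l * σ (π ((l.map Prod.fst).prod)) a)
          = c g * σ (π g) (cWord π σ c l * σ (π ((l.map Prod.fst).prod)) a) :=
            hc_c g hrefl _
        _ = c g * (σ (π g) (cWord π σ c l) * σ (π g) (σ (π ((l.map Prod.fst).prod)) a)) := by
            rw [map_mul]
        _ = c g * σ (π g) (cWord π σ c l) * σ (π g) (σ (π ((l.map Prod.fst).prod)) a) := by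
            rw [mul_assoc]
        _ = c g * cWord π σ c l * σ (π g) (σ (π ((l.map Prod.fst).prod)) a) := by
            rw [← hc_c g hrefl]
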